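/- Let p ≥ 1, λ ∈ (0,1], R > 0, and g : ℝⁿ → ℝ ∪ {+∞} be arbitrary. Define f(s) := sup_{t ∈ ℝⁿ} ( −λ |t − s|^p − g(t) ) for s ∈ ℝⁿ. If f is real-valued and bounded on the closed ball of radius R centered at the origin, then f is Lipschitz continuous on the closed ball of radius R/2 centered at the origin. -/

import Mathlib

open NNReal

lemma rpow_sub_rpow_le_aux {p a b : ℝ} (hp : 1 ≤ p) (hb : 0 ≤ b) (hba : b ≤ a) :
    a ^ p - b ^ p ≤ p * a ^ (p - 1) * (a - b) := by
  rcases eq_or_lt_of_le (hb.trans hba) with h | ha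
  · have hb0 : b = 0 := le_antisymm (hba.trans h.symm.le) hb
    have ha0 : a = 0 := h.symm
    have hp0 : (0:ℝ) < p := lt_of_lt_of_le one_pos hp
    simp [ha0, hb0, Real.zero_rpow hp0.ne']
  · have hs : (-1 : ℝ) ≤ b / a - 1 := by
      have : 0 ≤ b / a := div_nonneg hb ha.le
      linarith
    have hber := one_add_mul_self_le_rpow_one_add hs hp
    rw [add_sub_cancel] at hber
    have hdiv : (b / a) ^ p = b ^ p / a ^ p := Real.div_rpow hb ha.le p
    rw [hdiv] at hber
    have hap : (0:ℝ) < a ^ p := Real.rpow_pos_of_pos ha p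
    have h1 : (1 + p * (b / a - 1)) * a ^ p ≤ b ^ p := by
      calc (1 + p * (b / a - 1)) * a ^ p ≤ (b ^ p / a ^ p) * a ^ p :=
            mul_le_mul_of_nonneg_right hber hap.le
        _ = b ^ p := div_mul_cancel₀ _ hap.ne'
    have hsplit : a ^ p = a * a ^ (p - 1) := by
      rw [← Real.rpow_one_add' ha.le (by linarith)]
      ring_nf
    have hkey : (b / a - 1) * a ^ p = (b - a) * a ^ (p - 1) := by
      rw [hsplit]; field_simp
    have hexp : (1 + p * (b / a - 1)) * a ^ p = a ^ p + p * ((b / a - 1) * a ^ p) := by ring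
    rw [hexp, hkey] at h1
    linarith

lemma abs_rpow_sub_rpow_le_aux {p a b : ℝ} (hp : 1 ≤ p) (ha : 0 ≤ a) (hb : 0 ≤ b) :
    |a ^ p - b ^ p| ≤ p * (max a b) ^ (p - 1) * |a - b| := by
  rcases le_total b a with h | h
  · rw [abs_of_nonneg (by linarith : (0:ℝ) ≤ a - b),
      abs_of_nonneg (sub_nonneg.2 (Real.rpow_le_rpow hb h (by linarith))),
      max_eq_left h]
    exact rpow_sub_rpow_le_aux hp hb h
  · rw [abs_of_nonpos (by linarith : a - b ≤ 0),
      abs_of_nonpos (sub_nonpos.2 (Real.rpow_le_rpow ha h (by linarith))),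
      max_eq_right h, neg_sub, neg_sub]
    exact rpow_sub_rpow_le_aux hp ha h

/-- Local boundedness of a `λ|·|^p`-transform implies a local Lipschitz bound
(Euclidean version): if `f(s) = sup_t (−λ|t−s|^p − g(t))` (with `g` taking values in
`ℝ ∪ {+∞}`) is real-valued and bounded on the ball of radius `R`, then `f` is Lipschitz
on the ball of radius `R/2`. -/
theorem transform_locally_lipschitz (n : ℕ) (p lam R : ℝ)
    (hp : 1 ≤ p) (hlam₀ : 0 < lam) (hlam₁ : lam ≤ 1) (hR : 0 < R)
    (g : EuclideanSpace ℝ (Fin n) → EReal) (hg : ∀ t, ⊥ < g t)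
    (f : EuclideanSpace ℝ (Fin n) → ℝ)
    (hf : ∀ s ∈ Metric.closedBall (0 : EuclideanSpace ℝ (Fin n)) R,
      (⨆ t : EuclideanSpace ℝ (Fin n),
        (((-(lam * dist t s ^ p) : ℝ) : EReal) - g t)) = (f s : EReal))
    (hbdd : ∃ C : ℝ, ∀ s ∈ Metric.closedBall (0 : EuclideanSpace ℝ (Fin n)) R, |f s| ≤ C) :
    ∃ K : ℝ≥0, LipschitzOnWith K f
      (Metric.closedBall (0 : EuclideanSpace ℝ (Fin n)) (R / 2)) := by
  obtain ⟨C, hC⟩ := hbdd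
  have hr : 0 < R / 2 := by linarith
  set r : ℝ := R / 2 with hr_def
  have hC0 : 0 ≤ C := (abs_nonneg _).trans (hC 0 (by simp [hR.le]))
  have hp0 : (0:ℝ) < p := lt_of_lt_of_le one_pos hp
  have hp1 : (0:ℝ) ≤ p - 1 := by linarith
  set B : ℝ := max ((3 * r) ^ (p - 1)) (3 ^ (p - 1) * ((2 * C + 1) / (lam * r))) with hB_def
  have hB0 : 0 ≤ B := le_trans (Real.rpow_nonneg (by linarith) _) (le_max_left _ _)
  set K' : ℝ := lam * p * B with hK'_def
  have hK'0 : 0 ≤ K' := by positivity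
  have key : ∀ s₁ ∈ Metric.closedBall (0:EuclideanSpace ℝ (Fin n)) r,
      ∀ s₂ ∈ Metric.closedBall (0:EuclideanSpace ℝ (Fin n)) r,
      f s₁ - f s₂ ≤ K' * dist s₁ s₂ := by
    intro s₁ hs₁ s₂ hs₂
    have main : ∀ ε : ℝ, 0 < ε → ε ≤ 1 → f s₁ - f s₂ ≤ K' * dist s₁ s₂ + ε := by
      intro ε hε hε1
      have hs₁' : dist s₁ (0:EuclideanSpace ℝ (Fin n)) ≤ r := Metric.mem_closedBall.mp hs₁
      have hs₂' : dist s₂ (0:EuclideanSpace ℝ (Fin n)) ≤ r := Metric.mem_closedBall.mp hs₂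
      have hs₁R : s₁ ∈ Metric.closedBall (0:EuclideanSpace ℝ (Fin n)) R :=
        Metric.mem_closedBall.mpr (by rw [hr_def] at hs₁'; linarith)
      have hs₂R : s₂ ∈ Metric.closedBall (0:EuclideanSpace ℝ (Fin n)) R :=
        Metric.mem_closedBall.mpr (by rw [hr_def] at hs₂'; linarith)
      have hlt : ((f s₁ - ε : ℝ) : EReal) <
          ⨆ t : EuclideanSpace ℝ (Fin n), (((-(lam * dist t s₁ ^ p) : ℝ) : EReal) - g t) := by
        rw [hf s₁ hs₁R]
        exact_mod_cast sub_lt_self (f s₁) hε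
      obtain ⟨t, ht⟩ := lt_iSup_iff.mp hlt
      have htop : g t ≠ ⊤ := by
        intro h
        rw [h, EReal.sub_top] at ht
        exact (not_lt_bot ht)
      have hbot : g t ≠ ⊥ := (hg t).ne'
      set G := (g t).toReal with hG_def
      have hGt : g t = (G : EReal) := (EReal.coe_toReal htop hbot).symm
      set d₁ := dist t s₁ with hd₁
      set d₂ := dist t s₂ with hd₂
      have ht' : f s₁ - ε < -(lam * d₁ ^ p) - G := by
        rw [hGt, ← EReal.coe_sub] at ht
        exact_mod_cast ht
      have ineq2 : ∀ s' ∈ Metric.closedBall (0:EuclideanSpace ℝ (Fin n)) R,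
          -(lam * dist t s' ^ p) - G ≤ f s' := by
        intro s' hs'
        have h := le_iSup (fun u : EuclideanSpace ℝ (Fin n) =>
          (((-(lam * dist u s' ^ p) : ℝ) : EReal) - g u)) t
        rw [hf s' hs'] at h
        rw [hGt, ← EReal.coe_sub] at h
        exact_mod_cast h
      have hds : dist s₁ s₂ ≤ 2 * r := by
        calc dist s₁ s₂ ≤ dist s₁ 0 + dist (0:EuclideanSpace ℝ (Fin n)) s₂ := dist_triangle _ _ _
          _ ≤ r + r := add_le_add hs₁' (by rw [dist_comm]; exact hs₂')
          _ = 2 * r := by ring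
      have hd₂d₁ : d₂ ≤ d₁ + dist s₁ s₂ := by
        calc d₂ ≤ dist t s₁ + dist s₁ s₂ := dist_triangle _ _ _
          _ = d₁ + dist s₁ s₂ := rfl
      have hd₁0 : (0:ℝ) ≤ d₁ := dist_nonneg
      have hd₂0 : (0:ℝ) ≤ d₂ := dist_nonneg
      have hmax : (max d₁ d₂) ^ (p-1) ≤ B := by
        rcases le_or_gt d₁ r with hcase | hcase
        · have hmle : max d₁ d₂ ≤ 3 * r := max_le (by linarith) (by linarith)
          calc (max d₁ d₂) ^ (p-1) ≤ (3*r) ^ (p-1) :=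
                Real.rpow_le_rpow (hd₁0.trans (le_max_left _ _)) hmle hp1
            _ ≤ B := le_max_left _ _
        · have hd₁pos : (0:ℝ) < d₁ := lt_trans hr hcase
          set s' : EuclideanSpace ℝ (Fin n) := s₁ + (r / d₁) • (t - s₁) with hs'_def
          have hrd : (0:ℝ) ≤ r / d₁ := by positivity
          have hnorm_ts₁ : ‖t - s₁‖ = d₁ := (dist_eq_norm t s₁).symm
          have hs'R : s' ∈ Metric.closedBall (0:EuclideanSpace ℝ (Fin n)) R := by
            rw [Metric.mem_closedBall, dist_zero_right]
            have hn1 : ‖s₁‖ ≤ r := by rw [← dist_zero_right]; exact hs₁'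
            calc ‖s₁ + (r/d₁) • (t - s₁)‖ ≤ ‖s₁‖ + ‖(r/d₁) • (t - s₁)‖ := norm_add_le _ _
              _ = ‖s₁‖ + (r/d₁) * d₁ := by
                  rw [norm_smul, Real.norm_of_nonneg hrd, hnorm_ts₁]
              _ = ‖s₁‖ + r := by rw [div_mul_cancel₀ _ hd₁pos.ne']
              _ ≤ R := by rw [hr_def] at hn1 ⊢; linarith
          have hts' : dist t s' = d₁ - r := by
            have hdiff : t - s' = (1 - r/d₁) • (t - s₁) := by
              rw [hs'_def]
              module
            have h1r : (0:ℝ) ≤ 1 - r/d₁ := by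
              rw [sub_nonneg, div_le_one hd₁pos]; exact hcase.le
            rw [dist_eq_norm, hdiff, norm_smul, Real.norm_of_nonneg h1r, hnorm_ts₁]
            field_simp
          have h2' := ineq2 s' hs'R
          rw [hts'] at h2'
          have hfs' : f s' ≤ C := le_of_abs_le (hC s' hs'R)
          have hfs₁ : -C ≤ f s₁ := neg_abs_le (f s₁) |>.trans' (neg_le_neg (hC s₁ hs₁R))
          have hexp : lam * (d₁ ^ p - (d₁ - r) ^ p) = lam * d₁ ^ p - lam * (d₁ - r) ^ p := by ring
          have hcomb : lam * (d₁ ^ p - (d₁ - r) ^ p) ≤ 2*C + 1 := by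
            rw [hexp]; linarith
          have e1 : d₁ ^ p = d₁ * d₁ ^ (p-1) := by
            rw [← Real.rpow_one_add' hd₁pos.le (by linarith)]; ring_nf
          have e2 : (d₁ - r) ^ p ≤ (d₁ - r) * d₁ ^ (p-1) := by
            have hdr : (0:ℝ) ≤ d₁ - r := by linarith
            have e2' : (d₁ - r) ^ p = (d₁ - r) * (d₁ - r) ^ (p-1) := by
              rw [← Real.rpow_one_add' hdr (by linarith)]; ring_nf
            rw [e2']
            exact mul_le_mul_of_nonneg_left
              (Real.rpow_le_rpow hdr (by linarith) hp1) hdr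
          have hlow : r * d₁ ^ (p-1) ≤ d₁ ^ p - (d₁ - r) ^ p := by
            have : d₁ * d₁ ^ (p-1) - (d₁ - r) * d₁ ^ (p-1) = r * d₁ ^ (p-1) := by ring
            linarith [e1, e2]
          have hd₁p : d₁ ^ (p-1) ≤ (2*C+1)/(lam * r) := by
            rw [le_div_iff₀ (by positivity)]
            have h3 := mul_le_mul_of_nonneg_left hlow hlam₀.le
            have h4 : d₁ ^ (p-1) * (lam * r) = lam * (r * d₁ ^ (p-1)) := by ring
            linarith
          have hmx : max d₁ d₂ ≤ 3 * d₁ := max_le (by linarith) (by linarith)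
          calc (max d₁ d₂) ^ (p-1) ≤ (3*d₁) ^ (p-1) :=
                Real.rpow_le_rpow (hd₁0.trans (le_max_left _ _)) hmx hp1
            _ = 3 ^ (p-1) * d₁ ^ (p-1) := Real.mul_rpow (by norm_num) hd₁0
            _ ≤ 3 ^ (p-1) * ((2*C+1)/(lam*r)) :=
                mul_le_mul_of_nonneg_left hd₁p (Real.rpow_nonneg (by norm_num) _)
            _ ≤ B := le_max_right _ _
      have hd₂s₂ := ineq2 s₂ hs₂R
      have habs : |d₂ ^ p - d₁ ^ p| ≤ p * (max d₂ d₁) ^ (p-1) * |d₂ - d₁| :=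
        abs_rpow_sub_rpow_le_aux hp hd₂0 hd₁0
      have habs' : |d₂ - d₁| ≤ dist s₁ s₂ := by
        rw [abs_sub_comm, hd₁, hd₂, dist_comm t s₁, dist_comm t s₂]
        exact abs_dist_sub_le s₁ s₂ t
      have hmaxcomm : (max d₂ d₁ : ℝ) ^ (p-1) ≤ B := by
        rw [max_comm]; exact hmax
      have hfinal : lam * (d₂ ^ p - d₁ ^ p) ≤ K' * dist s₁ s₂ := by
        calc lam * (d₂^p - d₁^p) ≤ lam * |d₂^p - d₁^p| :=
              mul_le_mul_of_nonneg_left (le_abs_self _) hlam₀.le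
          _ ≤ lam * (p * (max d₂ d₁)^(p-1) * |d₂ - d₁|) :=
              mul_le_mul_of_nonneg_left habs hlam₀.le
          _ ≤ lam * (p * B * dist s₁ s₂) := by
              refine mul_le_mul_of_nonneg_left ?_ hlam₀.le
              refine mul_le_mul (mul_le_mul_of_nonneg_left hmaxcomm hp0.le) habs'
                (abs_nonneg _) (by positivity)
          _ = K' * dist s₁ s₂ := by rw [hK'_def]; ring
      have hexp2 : lam * (d₂ ^ p - d₁ ^ p) = lam * d₂ ^ p - lam * d₁ ^ p := by ring
      rw [hexp2] at hfinal
      linarith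
    by_contra hcon
    push_neg at hcon
    set δ : ℝ := f s₁ - f s₂ - K' * dist s₁ s₂ with hδ_def
    have hδ : 0 < δ := by rw [hδ_def]; linarith
    have hε0 : 0 < min δ 1 / 2 := by
      have : 0 < min δ 1 := lt_min hδ one_pos
      linarith
    have hε1 : min δ 1 / 2 ≤ 1 := by
      have : min δ 1 ≤ 1 := min_le_right _ _
      linarith
    have h := main (min δ 1 / 2) hε0 hε1
    have : min δ 1 / 2 < δ := by
      have : min δ 1 ≤ δ := min_le_left _ _
      linarith
    rw [hδ_def] at this
    linarith
  refine ⟨⟨K', hK'0⟩, LipschitzOnWith.of_dist_le_mul ?_⟩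
  intro x hx y hy
  rw [Real.dist_eq]; change |f x - f y| ≤ K' * dist x y
  have h1 := key x hx y hy
  have h2 := key y hy x hx
  rw [dist_comm y x] at h2
  rw [abs_sub_le_iff]
  exact ⟨h1, h2⟩
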